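/- The minimizer over symmetric matrices Σ of ‖Σ - S‖_F^2 + γΣ_i(σ_i(Σ) - σ̄_Σ)^2 subject to tr(Σ) = tr(S) is Σ̂ = (S + γ t I)/(1+γ), where t = tr(S)/p. -/

import Mathlib

open Matrix Finset

lemma eig_sum_trace {p : ℕ} (A : Matrix (Fin p) (Fin p) ℝ) (hA : A.IsHermitian) :
    ∑ i, hA.eigenvalues i = A.trace := by
  have hU : (hA.eigenvectorUnitary : Matrix (Fin p) (Fin p) ℝ) *
      star (hA.eigenvectorUnitary : Matrix (Fin p) (Fin p) ℝ) = 1 :=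
    (Matrix.mem_unitaryGroup_iff).mp hA.eigenvectorUnitary.2
  have h : star (hA.eigenvectorUnitary : Matrix (Fin p) (Fin p) ℝ) * A *
      (hA.eigenvectorUnitary : Matrix (Fin p) (Fin p) ℝ) =
      diagonal (RCLike.ofReal ∘ hA.eigenvalues) := by
    simpa using hA.conjStarAlgAut_star_eigenvectorUnitary
  have h2 := congrArg Matrix.trace h
  rw [Matrix.trace_mul_cycle, hU, Matrix.one_mul] at h2
  simpa [Matrix.trace_diagonal] using h2.symm

lemma eig_sq_sum_trace {p : ℕ} (A : Matrix (Fin p) (Fin p) ℝ) (hA : A.IsHermitian) :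
    ∑ i, (hA.eigenvalues i)^2 = (A * A).trace := by
  set U : Matrix (Fin p) (Fin p) ℝ := (hA.eigenvectorUnitary : Matrix (Fin p) (Fin p) ℝ) with hUdef
  have hU : U * star U = 1 := (Matrix.mem_unitaryGroup_iff).mp hA.eigenvectorUnitary.2
  have hU2 : ∀ X : Matrix (Fin p) (Fin p) ℝ, U * (star U * X) = X := fun X => by
    rw [← Matrix.mul_assoc, hU, Matrix.one_mul]
  have h : star (hA.eigenvectorUnitary : Matrix (Fin p) (Fin p) ℝ) * A *
      (hA.eigenvectorUnitary : Matrix (Fin p) (Fin p) ℝ) =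
      diagonal (RCLike.ofReal ∘ hA.eigenvalues) := by
    simpa using hA.conjStarAlgAut_star_eigenvectorUnitary
  have key : (A * A).trace = ((star U * A * U) * (star U * A * U)).trace := by
    conv_rhs => rw [Matrix.trace_mul_comm]
    simp only [Matrix.mul_assoc, hU2]
    conv_rhs => rw [Matrix.trace_mul_comm]
    simp only [Matrix.mul_assoc]
    rw [hU, Matrix.mul_one]
  rw [key, h, Matrix.diagonal_mul_diagonal, Matrix.trace_diagonal]
  simp [sq]

lemma trace_mul_self_frob {p : ℕ} (A : Matrix (Fin p) (Fin p) ℝ) (hA : A.IsHermitian) :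
    (A * A).trace = ∑ i, ∑ j, (A i j)^2 := by
  simp only [Matrix.trace, Matrix.diag, Matrix.mul_apply]
  refine Finset.sum_congr rfl fun i _ => Finset.sum_congr rfl fun j _ => ?_
  have : A j i = A i j := by
    conv_lhs => rw [← hA.eq]
    simp [Matrix.conjTranspose_apply]
  rw [this, sq]

lemma penalty_eq {p : ℕ} (hp : 0 < p) (A : Matrix (Fin p) (Fin p) ℝ) (hA : A.IsHermitian) :
    ∑ i, (hA.eigenvalues i - (∑ j, hA.eigenvalues j) / p) ^ 2
      = (∑ i, ∑ j, (A i j)^2) - A.trace^2 / p := by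
  have hpR : (p : ℝ) ≠ 0 := Nat.cast_ne_zero.mpr hp.ne'
  have h1 := eig_sum_trace A hA
  have h2 := (eig_sq_sum_trace A hA).trans (trace_mul_self_frob A hA)
  have hcard : (Finset.univ : Finset (Fin p)).card = p := by simp
  calc ∑ i, (hA.eigenvalues i - (∑ j, hA.eigenvalues j) / p) ^ 2
      = ∑ i, ((hA.eigenvalues i)^2
          - 2 * ((∑ j, hA.eigenvalues j) / p) * hA.eigenvalues i
          + ((∑ j, hA.eigenvalues j) / p)^2) :=
        Finset.sum_congr rfl fun i _ => by ring
    _ = (∑ i, (hA.eigenvalues i)^2)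
          - 2 * ((∑ j, hA.eigenvalues j) / p) * (∑ i, hA.eigenvalues i)
          + p * ((∑ j, hA.eigenvalues j) / p)^2 := by
        rw [Finset.sum_add_distrib, Finset.sum_sub_distrib, ← Finset.mul_sum,
          Finset.sum_const, hcard, nsmul_eq_mul]
    _ = (∑ i, ∑ j, (A i j)^2) - A.trace^2 / p := by
        rw [h2, h1]; field_simp; ring

set_option maxHeartbeats 1000000 in
/-- The minimizer over symmetric `Σ` with `tr Σ = tr S` of
`‖Σ - S‖_F² + γ ∑ i (σ_i(Σ) - σ̄_Σ)²` is `Σ̂ = (S + γ t I)/(1+γ)`, `t = tr(S)/p`. -/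
theorem eigen_penalty_minimizer (p : ℕ) (hp : 0 < p) (S : Matrix (Fin p) (Fin p) ℝ)
    (hS : S.IsHermitian) (gam : ℝ) (hgam : 0 < gam) :
    ∀ Sig : Matrix (Fin p) (Fin p) ℝ, Sig.IsHermitian → Sig.trace = S.trace →
      (∑ i, ∑ j, (((1 + gam)⁻¹ •
            (S + (gam * (S.trace / p)) • (1 : Matrix (Fin p) (Fin p) ℝ))) i j - S i j) ^ 2)
        + gam * (if h : ((1 + gam)⁻¹ •
              (S + (gam * (S.trace / p)) • (1 : Matrix (Fin p) (Fin p) ℝ))).IsHermitian then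
            ∑ i, (h.eigenvalues i - (∑ j, h.eigenvalues j) / p) ^ 2 else 0)
      ≤ (∑ i, ∑ j, (Sig i j - S i j) ^ 2)
        + gam * (if h : Sig.IsHermitian then
            ∑ i, (h.eigenvalues i - (∑ j, h.eigenvalues j) / p) ^ 2 else 0) := by
  intro Sig hSig htr
  have h1g : (1 : ℝ) + gam ≠ 0 := by positivity
  have hpR : (p : ℝ) ≠ 0 := Nat.cast_ne_zero.mpr hp.ne'
  set A : Matrix (Fin p) (Fin p) ℝ :=
    (1 + gam)⁻¹ • (S + (gam * (S.trace / p)) • (1 : Matrix (Fin p) (Fin p) ℝ)) with hAdef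
  have hA : A.IsHermitian := by
    rw [hAdef]
    have hT : Sᵀ = S := by ext i j; simpa using hS.apply i j
    unfold Matrix.IsHermitian
    simp [Matrix.conjTranspose_smul, Matrix.conjTranspose_add, hS.eq, hT]
  have htrA : A.trace = S.trace := by
    rw [hAdef]
    simp only [Matrix.trace_smul, Matrix.trace_add, Matrix.trace_one, Fintype.card_fin, smul_eq_mul]
    field_simp
  rw [dif_pos hA, dif_pos hSig, penalty_eq hp A hA, penalty_eq hp Sig hSig, htrA, htr]
  have hentry : ∀ i j, (1 + gam) * A i j
      = S i j + gam * (S.trace / p) * ((1 : Matrix (Fin p) (Fin p) ℝ) i j) := by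
    intro i j
    rw [hAdef]
    simp only [Matrix.smul_apply, Matrix.add_apply, smul_eq_mul]
    field_simp
  have key : ∀ i j, (Sig i j - S i j)^2 + gam * (Sig i j)^2
      - ((A i j - S i j)^2 + gam * (A i j)^2)
      = (1 + gam) * (Sig i j - A i j)^2
        + 2 * gam * (S.trace / p) * (((1 : Matrix (Fin p) (Fin p) ℝ) i j) * (Sig i j - A i j)) := by
    intro i j
    linear_combination (2 * (Sig i j - A i j)) * hentry i j
  have hid : ∑ i, ∑ j, ((1 : Matrix (Fin p) (Fin p) ℝ) i j) * (Sig i j - A i j)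
      = Sig.trace - A.trace := by
    simp only [Matrix.one_apply, ite_mul, one_mul, zero_mul]
    simp [Matrix.trace, Matrix.diag, Finset.sum_sub_distrib]
  have diff : (∑ i, ∑ j, (Sig i j - S i j)^2) + gam * (∑ i, ∑ j, (Sig i j)^2)
      - ((∑ i, ∑ j, (A i j - S i j)^2) + gam * (∑ i, ∑ j, (A i j)^2))
      = (1 + gam) * ∑ i, ∑ j, (Sig i j - A i j)^2 := by
    calc (∑ i, ∑ j, (Sig i j - S i j)^2) + gam * (∑ i, ∑ j, (Sig i j)^2)
        - ((∑ i, ∑ j, (A i j - S i j)^2) + gam * (∑ i, ∑ j, (A i j)^2))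
        = ∑ i, ∑ j, ((Sig i j - S i j)^2 + gam * (Sig i j)^2
            - ((A i j - S i j)^2 + gam * (A i j)^2)) := by
          simp only [Finset.sum_sub_distrib, Finset.sum_add_distrib, ← Finset.mul_sum]
      _ = ∑ i, ∑ j, ((1 + gam) * (Sig i j - A i j)^2
            + 2 * gam * (S.trace / p) * (((1 : Matrix (Fin p) (Fin p) ℝ) i j)
              * (Sig i j - A i j))) :=
          Finset.sum_congr rfl fun i _ => Finset.sum_congr rfl fun j _ => key i j
      _ = (1 + gam) * (∑ i, ∑ j, (Sig i j - A i j)^2)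
            + 2 * gam * (S.trace / p)
              * (∑ i, ∑ j, ((1 : Matrix (Fin p) (Fin p) ℝ) i j) * (Sig i j - A i j)) := by
          simp only [Finset.sum_add_distrib, ← Finset.mul_sum]
      _ = (1 + gam) * ∑ i, ∑ j, (Sig i j - A i j)^2 := by
          rw [hid, htr, htrA]; ring
  have hnn : 0 ≤ (1 + gam) * ∑ i, ∑ j, (Sig i j - A i j)^2 := by positivity
  nlinarith [diff, hnn]
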